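/- Let d ≥ 1, ℓ ≥ 1, and let γ : Fin d × Fin ℓ ≃ Fin (d·ℓ) be a bijection such that for each i the map j ↦ γ(i, j) is strictly monotone, with curve value F_γ as defined. If p and q are grid points with F_γ(q) = F_γ(p) + 1, then there is exactly one dimension b : Fin d with q b > p b; for this b one has q b = p b + 1, and for every other dimension i ≠ b one has q i ≤ p i. -/

import Mathlib

lemma bmc_tb_div (n i j : ℕ) : (n / 2^i).testBit j = n.testBit (i+j) := by
  simp [Nat.testBit_div_two_pow, Nat.add_comm]

lemma bmc_sum_two_pow_bits (f : ℕ → Bool) (N : ℕ) :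
    (∑ m ∈ Finset.range N, (if f m then 1 else 0) * 2^m) < 2^N ∧
    ∀ t, (∑ m ∈ Finset.range N, (if f m then 1 else 0) * 2^m).testBit t
      = (f t && decide (t < N)) := by
  induction N with
  | zero => simp
  | succ N ih =>
    obtain ⟨hlt, hbit⟩ := ih
    have hsum : ∑ m ∈ Finset.range (N+1), (if f m then 1 else 0)*2^m
        = 2^N * (if f N then 1 else 0) + ∑ m ∈ Finset.range N, (if f m then 1 else 0)*2^m := by
      rw [Finset.sum_range_succ]; ring
    have h1 : 2^N * (if f N then 1 else 0) ≤ 2^N := by split <;> simp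
    constructor
    · rw [hsum]
      exact lt_of_lt_of_le (Nat.add_lt_add_of_le_of_lt h1 hlt) (by rw [pow_succ]; omega)
    · intro t
      rw [hsum, Nat.testBit_two_pow_mul_add _ hlt t]
      by_cases h : t < N
      · rw [if_pos h, hbit t]
        have h' : t < N + 1 := Nat.lt_succ_of_lt h
        simp [h, h']
      · rw [if_neg h]
        rcases eq_or_lt_of_le (Nat.le_of_not_lt h) with rfl | h'
        · simp only [Nat.sub_self]
          cases hf : f N <;> simp [hf]
        · have hne : ¬ t < N + 1 := by omega
          have h2 : 1 < 2^(t-N) := by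
            have : 1 ≤ t - N := by omega
            calc 1 < 2^1 := by norm_num
            _ ≤ 2^(t-N) := Nat.pow_le_pow_right (by norm_num) this
          have : (if f N then (1:ℕ) else 0) < 2^(t-N) := by split <;> omega
          simp [Nat.testBit_eq_false_of_lt this, hne]

lemma bmc_testBit_succ {n k : ℕ} (h1 : ∀ m, m < k → n.testBit m = true)
    (h2 : n.testBit k = false) (t : ℕ) :
    (n+1).testBit t = (decide (t = k) || (decide (k < t) && n.testBit t)) := by
  have h2k : (0:ℕ) < 2^k := Nat.pow_pos (by norm_num)
  have hmod : n % 2^(k+1) = 2^k - 1 := by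
    apply Nat.eq_of_testBit_eq
    intro i
    rw [Nat.testBit_mod_two_pow, Nat.testBit_two_pow_sub_one]
    rcases lt_trichotomy i k with h | rfl | h
    · have : i < k + 1 := by omega
      simp [h, this, h1 i h]
    · simp [h2]
    · have hi1 : ¬ i < k + 1 := by omega
      have hi2 : ¬ i < k := by omega
      simp [hi1, hi2]
  have hdm := Nat.div_add_mod n (2^(k+1))
  rw [hmod] at hdm
  have hn1 : n + 1 = 2^(k+1) * (n / 2^(k+1)) + 2^k := by
    conv_lhs => rw [← hdm]
    rw [Nat.add_assoc, Nat.sub_add_cancel h2k]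
  have hlt : (2:ℕ)^k < 2^(k+1) := Nat.pow_lt_pow_right (by norm_num) (Nat.lt_succ_self k)
  rw [hn1, Nat.testBit_two_pow_mul_add _ hlt t]
  by_cases h : t < k + 1
  · rw [if_pos h, Nat.testBit_two_pow]
    rcases eq_or_lt_of_le (Nat.lt_succ_iff.mp h) with rfl | h'
    · simp
    · have e1 : k ≠ t := by omega
      have e2 : t ≠ k := by omega
      have e3 : ¬ k < t := by omega
      simp [e1, e2, e3]
  · rw [if_neg h, bmc_tb_div]
    have hkt : k < t := by omega
    have : k + 1 + (t - (k+1)) = t := by omega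
    rw [this]
    have : t ≠ k := by omega
    simp [this, hkt]

/-- Along any directed edge of a bit-merging curve, exactly one coordinate
rises (by exactly one) while all other coordinates weakly drop. -/
theorem bmc_directed_edge_unique_rise (d ℓ : ℕ) (hd : 1 ≤ d) (hl : 1 ≤ ℓ)
    (γ : Fin d × Fin ℓ ≃ Fin (d * ℓ))
    (hγ : ∀ i : Fin d, StrictMono fun j : Fin ℓ => γ (i, j))
    (F : (Fin d → ℕ) → ℕ)
    (hF : ∀ p, F p = ∑ i : Fin d, ∑ j : Fin ℓ,
        (if Nat.testBit (p i) j then 1 else 0) * 2 ^ (γ (i, j) : ℕ))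
    (p q : Fin d → ℕ) (hp : ∀ i, p i < 2 ^ ℓ) (hq : ∀ i, q i < 2 ^ ℓ)
    (hedge : F q = F p + 1) :
    ∃ b : Fin d, q b = p b + 1 ∧ (∀ i : Fin d, i ≠ b → q i ≤ p i) ∧
      ∀ b' : Fin d, p b' < q b' → b' = b := by
  -- bit functions
  set fr : (Fin d → ℕ) → ℕ → Bool := fun r t =>
    if h : t < d*ℓ then (r ((γ.symm ⟨t,h⟩).1)).testBit ((γ.symm ⟨t,h⟩).2 : ℕ) else false
    with hfr
  have hrep : ∀ r : Fin d → ℕ,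
      F r = ∑ m ∈ Finset.range (d*ℓ), (if fr r m then 1 else 0) * 2^m := by
    intro r
    rw [hF, ← Fin.sum_univ_eq_sum_range (fun m => (if fr r m then 1 else 0) * 2^m) (d*ℓ),
      ← Equiv.sum_comp γ (fun m : Fin (d*ℓ) => (if fr r (m:ℕ) then 1 else 0) * 2^(m:ℕ)),
      Fintype.sum_prod_type]
    refine Finset.sum_congr rfl fun i _ => Finset.sum_congr rfl fun j _ => ?_
    have h : ((γ (i,j) : Fin (d*ℓ)) : ℕ) < d*ℓ := (γ (i,j)).isLt
    simp only [hfr, dif_pos h, Fin.eta, Equiv.symm_apply_apply]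
  have hbit : ∀ (r : Fin d → ℕ) t, (F r).testBit t = (fr r t && decide (t < d*ℓ)) := by
    intro r t
    rw [hrep r]
    exact (bmc_sum_two_pow_bits (fr r) (d*ℓ)).2 t
  have hbit' : ∀ (r : Fin d → ℕ) (i : Fin d) (j : Fin ℓ),
      (F r).testBit (γ (i,j)) = (r i).testBit j := by
    intro r i j
    rw [hbit]
    have h : ((γ (i,j) : Fin (d*ℓ)) : ℕ) < d*ℓ := (γ (i,j)).isLt
    simp only [hfr, dif_pos h, Fin.eta, Equiv.symm_apply_apply, h, decide_true, Bool.and_true]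
  set n := F p with hn
  -- find the lowest zero bit k of n
  have hex : ∃ t, n.testBit t = false := by
    refine ⟨d*ℓ, ?_⟩
    rw [hbit]; simp
  set k := Nat.find hex with hkdef
  have hk : n.testBit k = false := Nat.find_spec hex
  have hmin : ∀ m, m < k → n.testBit m = true := by
    intro m hm
    have := Nat.find_min hex hm
    simpa using this
  have hsucc := bmc_testBit_succ hmin hk
  have hkle : k ≤ d*ℓ := Nat.find_min' hex (by rw [hbit]; simp)
  have hklt : k < d*ℓ := by
    rcases eq_or_lt_of_le hkle with heq | h
    · exfalso
      have h1 : (F q).testBit (d*ℓ) = true := by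
        rw [hedge, hsucc (d*ℓ), heq]; simp
      rw [hbit] at h1; simp at h1
    · exact h
  set b : Fin d := (γ.symm ⟨k, hklt⟩).1 with hb
  set jb : Fin ℓ := (γ.symm ⟨k, hklt⟩).2 with hjb
  have hγb : (γ (b, jb) : ℕ) = k := by
    rw [hb, hjb]
    simp
  -- bits of q in terms of n+1
  have hqbit : ∀ (i : Fin d) (j : Fin ℓ), (q i).testBit j = (n+1).testBit (γ (i,j)) := by
    intro i j
    rw [← hbit' q i j, hedge, hn]
  have hpbit : ∀ (i : Fin d) (j : Fin ℓ), (p i).testBit j = n.testBit (γ (i,j)) := by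
    intro i j
    rw [← hbit' p i j, hn]
  -- γ(i,j) = k iff (i,j) = (b,jb)
  have hkey : ∀ (i : Fin d) (j : Fin ℓ), (γ (i,j) : ℕ) = k → i = b ∧ j = jb := by
    intro i j hij
    have : γ (i,j) = ⟨k, hklt⟩ := Fin.ext hij
    have := congrArg γ.symm this
    rw [Equiv.symm_apply_apply] at this
    constructor
    · rw [hb, ← this]
    · rw [hjb, ← this]
  -- trailing ones of p b
  have hpb_low : ∀ m, m < (jb:ℕ) → (p b).testBit m = true := by
    intro m hm
    have hml : m < ℓ := lt_trans hm jb.isLt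
    have : (γ (b, ⟨m, hml⟩) : ℕ) < k := by
      rw [← hγb]
      exact_mod_cast hγ b (show (⟨m, hml⟩ : Fin ℓ) < jb from hm)
    have := hmin _ this
    rw [hpbit b ⟨m, hml⟩]
    exact this
  have hpb_k : (p b).testBit jb = false := by
    rw [hpbit b jb, hγb]
    exact hk
  have hpsucc := bmc_testBit_succ hpb_low hpb_k
  -- p b + 1 < 2^ℓ
  have hpb1 : p b + 1 < 2^ℓ ∨ (p b + 1 = 2^ℓ) := by
    have := hp b; omega
  have hpb1' : p b + 1 < 2^ℓ := by
    rcases hpb1 with h | h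
    · exact h
    · exfalso
      have hpbeq : p b = 2^ℓ - 1 := by omega
      rw [hpbeq, Nat.testBit_two_pow_sub_one] at hpb_k
      simp [jb.isLt] at hpb_k
  -- q b = p b + 1
  have hmain : q b = p b + 1 := by
    apply Nat.eq_of_testBit_eq
    intro t
    by_cases ht : t < ℓ
    · rw [show t = ((⟨t, ht⟩ : Fin ℓ) : ℕ) from rfl, hqbit b ⟨t, ht⟩, hsucc, hpsucc]
      rcases lt_trichotomy t (jb:ℕ) with h | h | h
      · have h1 : (γ (b, ⟨t, ht⟩) : ℕ) < k := by
          rw [← hγb]; exact_mod_cast hγ b (show (⟨t, ht⟩ : Fin ℓ) < jb from h)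
        have h2 : (γ (b, ⟨t, ht⟩) : ℕ) ≠ k := by omega
        have h3 : ¬ k < (γ (b, ⟨t, ht⟩) : ℕ) := by omega
        have h4 : t ≠ (jb:ℕ) := by omega
        have h5 : ¬ (jb:ℕ) < t := by omega
        simp [h2, h3, h4, h5]
      · have hjeq : (⟨t, ht⟩ : Fin ℓ) = jb := Fin.ext h
        rw [hjeq, hγb]
        simp [h]
      · have h1 : k < (γ (b, ⟨t, ht⟩) : ℕ) := by
          rw [← hγb]; exact_mod_cast hγ b (show jb < (⟨t, ht⟩ : Fin ℓ) from h)
        have h2 : (γ (b, ⟨t, ht⟩) : ℕ) ≠ k := by omega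
        have h4 : t ≠ (jb:ℕ) := by omega
        simp [h2, h1, h4, h, hpbit b ⟨t, ht⟩]
    · have h2t : (2:ℕ)^ℓ ≤ 2^t := Nat.pow_le_pow_right (by norm_num) (Nat.le_of_not_lt ht)
      rw [Nat.testBit_eq_false_of_lt (lt_of_lt_of_le (hq b) h2t),
        Nat.testBit_eq_false_of_lt (lt_of_lt_of_le hpb1' h2t)]
  -- other coordinates weakly drop
  have hdrop : ∀ i : Fin d, i ≠ b → q i ≤ p i := by
    intro i hib
    have hland : q i &&& p i = q i := by
      apply Nat.eq_of_testBit_eq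
      intro t
      rw [Nat.testBit_land]
      by_cases ht : t < ℓ
      · rw [show t = ((⟨t, ht⟩ : Fin ℓ) : ℕ) from rfl, hqbit i ⟨t, ht⟩, hsucc]
        have hne : (γ (i, ⟨t, ht⟩) : ℕ) ≠ k := by
          intro h
          exact hib (hkey i ⟨t, ht⟩ h).1
        rcases lt_or_gt_of_ne hne with h | h
        · have : ¬ k < (γ (i, ⟨t, ht⟩) : ℕ) := by omega
          simp [hne, this]
        · simp [hne, h, hpbit i ⟨t, ht⟩]
      · have h2t : (2:ℕ)^ℓ ≤ 2^t := Nat.pow_le_pow_right (by norm_num) (Nat.le_of_not_lt ht)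
        rw [Nat.testBit_eq_false_of_lt (lt_of_lt_of_le (hq i) h2t)]
        simp
    calc q i = q i &&& p i := hland.symm
    _ ≤ p i := Nat.and_le_right
  exact ⟨b, hmain, hdrop, fun b' hb' => by
    by_contra hne
    exact absurd hb' (not_lt.mpr (hdrop b' hne))⟩
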